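/- Let L : H → G be bounded linear, bounded below, with ‖L‖ ≤ 1, let γ > 0, and let A, B be strictly positive on G. Then d_H(L ⊡_γ A, L ⊡_γ B) ≤ d_G(A, B), where d denotes the Thompson metric d(X,Y) = ln max{g(X,Y), g(Y,X)} with g(X,Y) = inf{λ > 0 : X ≼ λY}, and L ⊡_γ B = L* ∘ (B⁻¹ + γ(Id_G − L L*))⁻¹ ∘ L. That is, the resolvent cocomposition is nonexpansive for the Thompson metric. -/

import Mathlib

open ContinuousLinearMap MeasureTheory

noncomputable section

variable {E : Type*} [NormedAddCommGroup E] [InnerProductSpace ℝ E] [CompleteSpace E]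
variable {H G : Type*} [NormedAddCommGroup H] [InnerProductSpace ℝ H] [CompleteSpace H]
  [NormedAddCommGroup G] [InnerProductSpace ℝ G] [CompleteSpace G]

/-- Löwner partial order: `A ≼ B` iff `B - A` is a positive operator. -/
def Loewner (A B : E →L[ℝ] E) : Prop := (B - A).IsPositive

/-- Strictly positive operators: `α • Id ≼ A` for some `α > 0`. -/
def StrictlyPos (A : E →L[ℝ] E) : Prop :=
  IsSelfAdjoint A ∧ ∃ α : ℝ, 0 < α ∧ Loewner (α • (1 : E →L[ℝ] E)) A

/-- Bounded below linear operator. -/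
def BoundedBelow (L : H →L[ℝ] G) : Prop := ∃ β : ℝ, 0 < β ∧ ∀ x : H, β * ‖x‖ ≤ ‖L x‖

/-- Resolvent cocomposition `L ⊡_γ B = L* ∘ (B⁻¹ + γ(Id − L L*))⁻¹ ∘ L`. -/
def rcc (L : H →L[ℝ] G) (γ : ℝ) (B : G →L[ℝ] G) : H →L[ℝ] H :=
  (adjoint L) ∘L (Ring.inverse (Ring.inverse B + γ • ((1 : G →L[ℝ] G) - L ∘L adjoint L))) ∘L L

/-- Resolvent composition `L ⊙_γ B = (L ⊡_{1/γ} B⁻¹)⁻¹`. -/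
def rc (L : H →L[ℝ] G) (γ : ℝ) (B : G →L[ℝ] G) : H →L[ℝ] H :=
  Ring.inverse (rcc L (1/γ) (Ring.inverse B))

/-- Parallel composition `L* ▸ B = (L* ∘ B⁻¹ ∘ L)⁻¹`. -/
def parallelComp (L : H →L[ℝ] G) (B : G →L[ℝ] G) : H →L[ℝ] H :=
  Ring.inverse ((adjoint L) ∘L (Ring.inverse B) ∘L L)

/-- `g(A,B) = inf {λ > 0 : A ≼ λ B}`. -/
def gThomp (A B : E →L[ℝ] E) : ℝ := sInf {l : ℝ | 0 < l ∧ Loewner A (l • B)}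

/-- Thompson metric. -/
def dThomp (A B : E →L[ℝ] E) : ℝ := Real.log (max (gThomp A B) (gThomp B A))

/-- The (unique) positive square root of a positive operator. -/
def opSqrt (A : E →L[ℝ] E) : E →L[ℝ] E :=
  letI := Classical.propDecidable
  if h : ∃ S : E →L[ℝ] E, S.IsPositive ∧ S * S = A then h.choose else 0

/-- Real power `A^t` of a strictly positive operator, `t ∈ (0,1)`, via the
Balakrishnan integral formula `A^t = (sin (π t)/π) ∫₀^∞ s^{t-1} A (A + s)⁻¹ ds`. -/
def opRpow (A : E →L[ℝ] E) (t : ℝ) : E →L[ℝ] E :=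
  (Real.sin (Real.pi * t) / Real.pi) •
    ∫ s in Set.Ioi (0 : ℝ), s ^ (t - 1) • (A * Ring.inverse (A + s • (1 : E →L[ℝ] E)))

/-- Geometric mean `A # B = A^{1/2} (A^{-1/2} B A^{-1/2})^{1/2} A^{1/2}`. -/
def geomMean (A B : E →L[ℝ] E) : E →L[ℝ] E :=
  opSqrt A * opSqrt (Ring.inverse (opSqrt A) * B * Ring.inverse (opSqrt A)) * opSqrt A

/-- `t`-weighted geometric mean `A #_t B = A^{1/2} (A^{-1/2} B A^{-1/2})^t A^{1/2}`. -/
def wGeomMean (t : ℝ) (A B : E →L[ℝ] E) : E →L[ℝ] E :=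
  opSqrt A * opRpow (Ring.inverse (opSqrt A) * B * Ring.inverse (opSqrt A)) t * opSqrt A

local notation "⟪" x ", " y "⟫" => @inner ℝ _ _ x y

lemma isPositive_iff_re {T : E →L[ℝ] E} :
    T.IsPositive ↔ IsSelfAdjoint T ∧ ∀ x, 0 ≤ ⟪T x, x⟫ := by
  constructor
  · rintro ⟨h1, h2⟩
    exact ⟨ContinuousLinearMap.isSelfAdjoint_iff_isSymmetric.mpr h1, fun x => by simpa [ContinuousLinearMap.reApplyInnerSelf] using h2 x⟩
  · rintro ⟨h1, h2⟩
    exact ⟨ContinuousLinearMap.isSelfAdjoint_iff_isSymmetric.mp h1, fun x => by simpa [ContinuousLinearMap.reApplyInnerSelf] using h2 x⟩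

lemma Loewner.inner_le {A B : E →L[ℝ] E} (h : Loewner A B) (x : E) : ⟪A x, x⟫ ≤ ⟪B x, x⟫ := by
  have := (isPositive_iff_re.mp h).2 x
  simpa [sub_apply, inner_sub_left, sub_nonneg] using this

lemma loewner_of {A B : E →L[ℝ] E} (h : IsSelfAdjoint (B - A))
    (h2 : ∀ x, ⟪A x, x⟫ ≤ ⟪B x, x⟫) : Loewner A B := by
  rw [Loewner, isPositive_iff_re]
  exact ⟨h, fun x => by simpa [sub_apply, inner_sub_left, sub_nonneg] using h2 x⟩

lemma StrictlyPos.coercive {A : E →L[ℝ] E} (hA : StrictlyPos A) :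
    ∃ α : ℝ, 0 < α ∧ ∀ x, α * ‖x‖ ^ 2 ≤ ⟪A x, x⟫ := by
  obtain ⟨hsa, α, hα, hsp⟩ := hA
  refine ⟨α, hα, fun x => ?_⟩
  have := hsp.inner_le x
  simpa [real_inner_smul_left, real_inner_self_eq_norm_sq] using this

lemma isSelfAdjoint_smul_one {α : ℝ} : IsSelfAdjoint (α • (1 : E →L[ℝ] E)) := by
  rw [ContinuousLinearMap.isSelfAdjoint_iff']
  ext x
  have h1 : adjoint (1 : E →L[ℝ] E) = 1 := by
    rw [← ContinuousLinearMap.isSelfAdjoint_iff']; exact .one _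
  simp [h1]

lemma strictlyPos_of {A : E →L[ℝ] E} (hsa : IsSelfAdjoint A) {α : ℝ} (hα : 0 < α)
    (h : ∀ x, α * ‖x‖ ^ 2 ≤ ⟪A x, x⟫) : StrictlyPos A := by
  refine ⟨hsa, α, hα, loewner_of (hsa.sub isSelfAdjoint_smul_one) fun x => ?_⟩
  simpa [real_inner_smul_left, real_inner_self_eq_norm_sq] using h x

lemma StrictlyPos.inner_nonneg {A : E →L[ℝ] E} (hA : StrictlyPos A) (x : E) :
    0 ≤ ⟪A x, x⟫ := by
  obtain ⟨α, hα, h⟩ := hA.coercive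
  have := h x
  nlinarith [sq_nonneg ‖x‖]

def bilinOf (A : E →L[ℝ] E) : E →L[ℝ] E →L[ℝ] ℝ := (innerSL ℝ).comp A

lemma StrictlyPos.isUnit {A : E →L[ℝ] E} (hA : StrictlyPos A) : IsUnit A := by
  obtain ⟨α, hα, h⟩ := hA.coercive
  have hc : IsCoercive (bilinOf A) := ⟨α, hα, fun u => by
    have := h u; simpa [bilinOf, sq, mul_assoc] using this⟩
  set e := hc.continuousLinearEquivOfBilin with he_def
  have he : ∀ v, e v = A v := by
    intro v
    have h0 : ∀ w, ⟪e v - A v, w⟫ = 0 := by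
      intro w
      have h1 : ⟪e v, w⟫ = ⟪A v, w⟫ := hc.continuousLinearEquivOfBilin_apply v w
      simp [inner_sub_left, h1]
    have := h0 (e v - A v)
    rwa [inner_self_eq_zero, sub_eq_zero] at this
  refine ⟨⟨A, (e.symm : E →L[ℝ] E), ?_, ?_⟩, rfl⟩
  · ext x
    have : A ((e.symm : E →L[ℝ] E) x) = e (e.symm x) := (he _).symm
    simp only [ContinuousLinearMap.mul_apply, ContinuousLinearMap.one_apply]
    rw [this, ContinuousLinearEquiv.apply_symm_apply]
  · ext x
    have : A x = e x := (he x).symm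
    simp only [ContinuousLinearMap.mul_apply, ContinuousLinearMap.one_apply]
    rw [this]
    exact e.symm_apply_apply x
lemma StrictlyPos.mul_inverse {A : E →L[ℝ] E} (hA : StrictlyPos A) :
    A * Ring.inverse A = 1 := Ring.mul_inverse_cancel _ hA.isUnit

lemma StrictlyPos.inverse_mul {A : E →L[ℝ] E} (hA : StrictlyPos A) :
    Ring.inverse A * A = 1 := Ring.inverse_mul_cancel _ hA.isUnit

lemma StrictlyPos.apply_inverse {A : E →L[ℝ] E} (hA : StrictlyPos A) (x : E) :
    A (Ring.inverse A x) = x := by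
  have := congrArg (fun T : E →L[ℝ] E => T x) hA.mul_inverse
  simpa [ContinuousLinearMap.mul_apply] using this

lemma StrictlyPos.inverse_apply {A : E →L[ℝ] E} (hA : StrictlyPos A) (x : E) :
    Ring.inverse A (A x) = x := by
  have := congrArg (fun T : E →L[ℝ] E => T x) hA.inverse_mul
  simpa [ContinuousLinearMap.mul_apply] using this

lemma StrictlyPos.isSelfAdjoint_inverse {A : E →L[ℝ] E} (hA : StrictlyPos A) :
    IsSelfAdjoint (Ring.inverse A) := by
  have h1 : star (Ring.inverse A) * A = 1 := by
    have := congrArg star hA.mul_inverse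
    rwa [star_mul, star_one, hA.1.star_eq] at this
  have h2 : A * Ring.inverse A = 1 := hA.mul_inverse
  have := left_inv_eq_right_inv h1 h2
  rw [IsSelfAdjoint, this]

lemma StrictlyPos.inverse {A : E →L[ℝ] E} (hA : StrictlyPos A) :
    StrictlyPos (Ring.inverse A) := by
  obtain ⟨α, hα, hc⟩ := hA.coercive
  refine strictlyPos_of hA.isSelfAdjoint_inverse
      (α := α / (‖A‖ ^ 2 + 1)) (by positivity) fun x => ?_
  set y := Ring.inverse A x with hy
  have hAy : A y = x := hA.apply_inverse x
  have h1 : α * ‖y‖ ^ 2 ≤ ⟪A y, y⟫ := hc y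
  have h2 : ‖x‖ ^ 2 ≤ (‖A‖ ^ 2 + 1) * ‖y‖ ^ 2 := by
    have := A.le_opNorm y
    rw [hAy] at this
    nlinarith [norm_nonneg x, norm_nonneg (A : E →L[ℝ] E), norm_nonneg y]
  have h3 : ⟪Ring.inverse A x, x⟫ = ⟪A y, y⟫ := by
    rw [← hy, ← hAy]
    exact real_inner_comm _ _
  rw [h3]
  rw [div_mul_eq_mul_div, div_le_iff₀ (by positivity)] at *
  nlinarith [norm_nonneg (A : E →L[ℝ] E)]

lemma inverse_antitone {A B : E →L[ℝ] E} (hA : StrictlyPos A) (hB : StrictlyPos B)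
    (h : Loewner A B) : Loewner (Ring.inverse B) (Ring.inverse A) := by
  refine loewner_of (hA.isSelfAdjoint_inverse.sub hB.isSelfAdjoint_inverse) fun x => ?_
  set u := Ring.inverse B x with hu
  set v := Ring.inverse A x with hv
  have hBu : B u = x := hB.apply_inverse x
  have hAv : A v = x := hA.apply_inverse x
  have h1 : 0 ≤ ⟪A (u - v), u - v⟫ := hA.inner_nonneg _
  have h2 : ⟪A u, u⟫ ≤ ⟪B u, u⟫ := h.inner_le u
  have e1 : ⟪A (u - v), u - v⟫ = ⟪A u, u⟫ - ⟪A u, v⟫ - (⟪A v, u⟫ - ⟪A v, v⟫) := by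
    rw [map_sub, inner_sub_left, inner_sub_right, inner_sub_right]
  have e2 : ⟪A u, v⟫ = ⟪x, u⟫ := by
    rw [← ContinuousLinearMap.adjoint_inner_right A u v, hA.1.adjoint_eq, hAv]
    exact real_inner_comm x u
  have e3 : ⟪A v, u⟫ = ⟪x, u⟫ := by rw [hAv]
  have e4 : ⟪A v, v⟫ = ⟪x, v⟫ := by rw [hAv]
  have e5 : ⟪B u, u⟫ = ⟪x, u⟫ := by rw [hBu]
  have goal1 : ⟪u, x⟫ ≤ ⟪v, x⟫ := by
    rw [e1, e2, e3, e4] at h1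
    rw [e5] at h2
    have c1 := real_inner_comm u x
    have c2 := real_inner_comm v x
    linarith
  simpa [hu, hv] using goal1
lemma Loewner.trans {A B C : E →L[ℝ] E} (h1 : Loewner A B) (h2 : Loewner B C) :
    Loewner A C := by
  rw [Loewner]
  have := h2.add h1
  rwa [sub_add_sub_cancel] at this

lemma isSelfAdjoint_smul {c : ℝ} {T : E →L[ℝ] E} (hT : IsSelfAdjoint T) :
    IsSelfAdjoint (c • T) := by
  rw [IsSelfAdjoint, star_smul, star_trivial, hT.star_eq]

lemma Loewner.smul {A B : E →L[ℝ] E} (h : Loewner A B) {c : ℝ} (hc : 0 ≤ c) :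
    Loewner (c • A) (c • B) := by
  have hsa : IsSelfAdjoint (c • B - c • A) := by
    rw [← smul_sub]; exact isSelfAdjoint_smul h.isSelfAdjoint
  refine loewner_of hsa fun x => ?_
  have := h.inner_le x
  simp only [ContinuousLinearMap.smul_apply, real_inner_smul_left]
  exact mul_le_mul_of_nonneg_left this hc

lemma StrictlyPos.smul {A : E →L[ℝ] E} (hA : StrictlyPos A) {c : ℝ} (hc : 0 < c) :
    StrictlyPos (c • A) := by
  obtain ⟨α, hα, h⟩ := hA.coercive
  refine strictlyPos_of (isSelfAdjoint_smul hA.1) (α := c * α) (by positivity) fun x => ?_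
  have := h x
  simp only [ContinuousLinearMap.smul_apply, real_inner_smul_left]
  nlinarith

lemma StrictlyPos.inverse_smul {A : E →L[ℝ] E} (hA : StrictlyPos A) {c : ℝ} (hc : 0 < c) :
    Ring.inverse (c • A) = c⁻¹ • Ring.inverse A := by
  have h1 : (c • A) * (c⁻¹ • Ring.inverse A) = 1 := by
    ext x
    simp only [ContinuousLinearMap.mul_apply, ContinuousLinearMap.smul_apply, _root_.map_smul,
      ContinuousLinearMap.one_apply, smul_smul, inv_mul_cancel₀ hc.ne', one_smul]
    exact hA.apply_inverse x
  have h2 : (c⁻¹ • Ring.inverse A) * (c • A) = 1 := by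
    ext x
    simp only [ContinuousLinearMap.mul_apply, ContinuousLinearMap.smul_apply, _root_.map_smul,
      ContinuousLinearMap.one_apply, smul_smul, mul_inv_cancel₀ hc.ne', one_smul]
    exact hA.inverse_apply x
  have hu : IsUnit (c • A) := ⟨⟨c • A, c⁻¹ • Ring.inverse A, h1, h2⟩, rfl⟩
  calc Ring.inverse (c • A)
      = Ring.inverse (c • A) * ((c • A) * (c⁻¹ • Ring.inverse A)) := by rw [h1, mul_one]
    _ = (Ring.inverse (c • A) * (c • A)) * (c⁻¹ • Ring.inverse A) := by rw [mul_assoc]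
    _ = c⁻¹ • Ring.inverse A := by rw [Ring.inverse_mul_cancel _ hu, one_mul]
lemma Loewner.conj {A B : G →L[ℝ] G} (h : Loewner A B) (L : H →L[ℝ] G) :
    Loewner (adjoint L ∘L A ∘L L) (adjoint L ∘L B ∘L L) := by
  rw [Loewner]
  have h2 := ContinuousLinearMap.IsPositive.adjoint_conj (h : (B - A).IsPositive) L
  convert h2 using 1
  ext x
  simp [ContinuousLinearMap.sub_apply, ContinuousLinearMap.comp_apply, map_sub]

lemma isSelfAdjoint_one_sub_comp (L : H →L[ℝ] G) :
    IsSelfAdjoint ((1 : G →L[ℝ] G) - L ∘L adjoint L) := by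
  rw [ContinuousLinearMap.isSelfAdjoint_iff']
  have h1 : adjoint (1 : G →L[ℝ] G) = 1 := by
    rw [← ContinuousLinearMap.isSelfAdjoint_iff']; exact .one _
  rw [map_sub, h1, adjoint_comp, adjoint_adjoint]

lemma norm_adjoint_eq (L : H →L[ℝ] G) : ‖adjoint L‖ = ‖L‖ :=
  LinearIsometryEquiv.norm_map _ L

lemma inner_one_sub_nonneg (L : H →L[ℝ] G) (hL1 : ‖L‖ ≤ 1) (x : G) :
    0 ≤ ⟪((1 : G →L[ℝ] G) - L ∘L adjoint L) x, x⟫ := by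
  have h1 : ⟪(L ∘L adjoint L) x, x⟫ = ‖adjoint L x‖ ^ 2 := by
    rw [ContinuousLinearMap.comp_apply, ← ContinuousLinearMap.adjoint_inner_right,
      real_inner_self_eq_norm_sq]
  have h2 : ‖adjoint L x‖ ≤ ‖x‖ := by
    calc ‖adjoint L x‖ ≤ ‖adjoint L‖ * ‖x‖ := (adjoint L).le_opNorm x
      _ ≤ 1 * ‖x‖ := by
          have := norm_adjoint_eq L
          have := norm_nonneg x
          nlinarith
      _ = ‖x‖ := one_mul _
  have h3 : ⟪((1 : G →L[ℝ] G) - L ∘L adjoint L) x, x⟫ = ‖x‖ ^ 2 - ‖adjoint L x‖ ^ 2 := by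
    rw [ContinuousLinearMap.sub_apply, inner_sub_left, h1, ContinuousLinearMap.one_apply,
      real_inner_self_eq_norm_sq]
  rw [h3]
  nlinarith [norm_nonneg x, norm_nonneg (adjoint L x)]

lemma strictlyPos_M (L : H →L[ℝ] G) (hL1 : ‖L‖ ≤ 1) {γ : ℝ} (hγ : 0 < γ)
    {B : G →L[ℝ] G} (hB : StrictlyPos B) :
    StrictlyPos (Ring.inverse B + γ • ((1 : G →L[ℝ] G) - L ∘L adjoint L)) := by
  obtain ⟨α, hα, h⟩ := hB.inverse.coercive
  refine strictlyPos_of (hB.isSelfAdjoint_inverse.add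
    (isSelfAdjoint_smul (isSelfAdjoint_one_sub_comp L))) hα fun x => ?_
  have h2 := inner_one_sub_nonneg L hL1 x
  have h3 := h x
  simp only [ContinuousLinearMap.add_apply, inner_add_left, ContinuousLinearMap.smul_apply,
    real_inner_smul_left]
  nlinarith

lemma strictlyPos_conj {M : G →L[ℝ] G} (hM : StrictlyPos M) (L : H →L[ℝ] G)
    (hL : BoundedBelow L) : StrictlyPos (adjoint L ∘L M ∘L L) := by
  obtain ⟨α, hα, h⟩ := hM.coercive
  obtain ⟨β, hβ, hb⟩ := hL
  have hsa : IsSelfAdjoint (adjoint L ∘L M ∘L L) := by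
    rw [ContinuousLinearMap.isSelfAdjoint_iff']
    rw [adjoint_comp, adjoint_comp, adjoint_adjoint, hM.1.adjoint_eq]
    ext x
    simp [ContinuousLinearMap.comp_apply]
  refine strictlyPos_of hsa (α := α * β ^ 2) (by positivity) fun x => ?_
  have h1 : ⟪(adjoint L ∘L M ∘L L) x, x⟫ = ⟪M (L x), L x⟫ := by
    rw [ContinuousLinearMap.comp_apply, ContinuousLinearMap.adjoint_inner_left,
      ContinuousLinearMap.comp_apply]
  rw [h1]
  have h2 := h (L x)
  have h3 := hb x
  have h4 : (β * ‖x‖) ^ 2 ≤ ‖L x‖ ^ 2 := by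
    have := pow_le_pow_left₀ (by positivity) h3 2
    simpa using this
  nlinarith [norm_nonneg x, sq_nonneg ‖x‖]

lemma strictlyPos_rcc (L : H →L[ℝ] G) (hL : BoundedBelow L) (hL1 : ‖L‖ ≤ 1) {γ : ℝ}
    (hγ : 0 < γ) {B : G →L[ℝ] G} (hB : StrictlyPos B) : StrictlyPos (rcc L γ B) :=
  strictlyPos_conj (strictlyPos_M L hL1 hγ hB).inverse L hL
lemma isPositive_nonneg_smul {S : E →L[ℝ] E} (hsa : IsSelfAdjoint S)
    (hpos : ∀ x, 0 ≤ ⟪S x, x⟫) {c : ℝ} (hc : 0 ≤ c) : Loewner 0 (c • S) := by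
  refine loewner_of (by simpa using isSelfAdjoint_smul hsa) fun x => ?_
  simp only [ContinuousLinearMap.zero_apply, inner_zero_left,
    ContinuousLinearMap.smul_apply, real_inner_smul_left]
  exact mul_nonneg hc (hpos x)

lemma Loewner.add_left {A B C : E →L[ℝ] E} (h : Loewner A B) : Loewner (C + A) (C + B) := by
  rw [Loewner]
  have : C + B - (C + A) = B - A := by abel
  rw [this]
  exact h

lemma loewner_of_sub_pos {A B : E →L[ℝ] E} (h : Loewner 0 (B - A)) : Loewner A B := by
  have h2 : (B - A - 0).IsPositive := h
  rwa [sub_zero] at h2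

lemma rcc_mono_smul (L : H →L[ℝ] G) (hL1 : ‖L‖ ≤ 1) {γ : ℝ} (hγ : 0 < γ)
    {A B : G →L[ℝ] G} (hA : StrictlyPos A) (hB : StrictlyPos B) {ρ : ℝ} (hρ : 1 ≤ ρ)
    (hAB : Loewner A (ρ • B)) : Loewner (rcc L γ A) (ρ • rcc L γ B) := by
  have hρ0 : 0 < ρ := lt_of_lt_of_le one_pos hρ
  set S : G →L[ℝ] G := (1 : G →L[ℝ] G) - L ∘L adjoint L with hS
  have hρB : StrictlyPos (ρ • B) := hB.smul hρ0
  have hMA : StrictlyPos (Ring.inverse A + γ • S) := strictlyPos_M L hL1 hγ hA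
  have hMρB : StrictlyPos (Ring.inverse (ρ • B) + γ • S) := strictlyPos_M L hL1 hγ hρB
  have hMB : StrictlyPos (Ring.inverse B + γ • S) := strictlyPos_M L hL1 hγ hB
  have hMBs : StrictlyPos (ρ⁻¹ • (Ring.inverse B + γ • S)) := hMB.smul (by positivity)
  have h1 : Loewner (Ring.inverse (ρ • B)) (Ring.inverse A) := inverse_antitone hA hρB hAB
  have h2 : Loewner (Ring.inverse (ρ • B) + γ • S) (Ring.inverse A + γ • S) := by
    have := h1.add_left (C := γ • S)
    have e : ∀ X : G →L[ℝ] G, γ • S + X = X + γ • S := fun X => by abel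
    rwa [e, e] at this
  have h3 : Loewner (ρ⁻¹ • (Ring.inverse B + γ • S)) (Ring.inverse (ρ • B) + γ • S) := by
    refine loewner_of_sub_pos ?_
    have hd : (Ring.inverse (ρ • B) + γ • S) - ρ⁻¹ • (Ring.inverse B + γ • S)
        = (γ - ρ⁻¹ * γ) • S := by
      rw [hB.inverse_smul hρ0]
      ext x
      simp only [ContinuousLinearMap.sub_apply, ContinuousLinearMap.add_apply,
        ContinuousLinearMap.smul_apply, smul_add, smul_smul]
      module
    rw [hd]
    refine isPositive_nonneg_smul (isSelfAdjoint_one_sub_comp L)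
      (fun x => inner_one_sub_nonneg L hL1 x) ?_
    have hinv : ρ⁻¹ ≤ 1 := by
      rw [inv_le_one_iff₀]; right; exact hρ
    nlinarith
  have h4 : Loewner (Ring.inverse (Ring.inverse A + γ • S))
      (ρ • Ring.inverse (Ring.inverse B + γ • S)) := by
    have s1 : Loewner (Ring.inverse (Ring.inverse A + γ • S))
        (Ring.inverse (Ring.inverse (ρ • B) + γ • S)) := inverse_antitone hMρB hMA h2
    have s2 : Loewner (Ring.inverse (Ring.inverse (ρ • B) + γ • S))
        (Ring.inverse (ρ⁻¹ • (Ring.inverse B + γ • S))) := inverse_antitone hMBs hMρB h3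
    have s3 : Ring.inverse (ρ⁻¹ • (Ring.inverse B + γ • S))
        = ρ • Ring.inverse (Ring.inverse B + γ • S) := by
      rw [hMB.inverse_smul (by positivity), inv_inv]
    rw [s3] at s2
    exact s1.trans s2
  have h5 := h4.conj L
  have e2 : adjoint L ∘L (ρ • Ring.inverse (Ring.inverse B + γ • S)) ∘L L
      = ρ • (adjoint L ∘L Ring.inverse (Ring.inverse B + γ • S) ∘L L) := by
    ext x
    simp [ContinuousLinearMap.comp_apply, _root_.map_smul]
  rw [e2] at h5
  exact h5

lemma gSet_nonempty {A B : E →L[ℝ] E} (hA : StrictlyPos A) (hB : StrictlyPos B) :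
    {l : ℝ | 0 < l ∧ Loewner A (l • B)}.Nonempty := by
  obtain ⟨α, hα, hb⟩ := hB.coercive
  refine ⟨(‖A‖ + 1) / α, by positivity, ?_⟩
  refine loewner_of ((isSelfAdjoint_smul hB.1).sub hA.1) fun x => ?_
  have h1 : ⟪A x, x⟫ ≤ ‖A‖ * ‖x‖ ^ 2 := by
    have := real_inner_le_norm (A x) x
    have := A.le_opNorm x
    nlinarith [norm_nonneg x, norm_nonneg (A x)]
  have h2 := hb x
  have h3 : 0 ≤ ‖x‖ ^ 2 := sq_nonneg _
  simp only [ContinuousLinearMap.smul_apply, real_inner_smul_left]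
  rw [div_mul_eq_mul_div, le_div_iff₀ hα] at *
  nlinarith [norm_nonneg (A : E →L[ℝ] E)]

lemma gThomp_nonneg (A B : E →L[ℝ] E) : 0 ≤ gThomp A B :=
  Real.sInf_nonneg fun x hx => le_of_lt hx.1

lemma gThomp_le {A B : E →L[ℝ] E} {l : ℝ} (hl : 0 < l) (h : Loewner A (l • B)) :
    gThomp A B ≤ l :=
  csInf_le ⟨0, fun x hx => le_of_lt hx.1⟩ ⟨hl, h⟩

lemma loewner_smul_mono {A B : E →L[ℝ] E} (hB : StrictlyPos B) {l t : ℝ}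
    (h : Loewner A (l • B)) (hlt : l ≤ t) : Loewner A (t • B) := by
  refine h.trans (loewner_of ?_ fun x => ?_)
  · rw [← sub_smul]
    exact isSelfAdjoint_smul hB.1
  · simp only [ContinuousLinearMap.smul_apply, real_inner_smul_left]
    exact mul_le_mul_of_nonneg_right hlt (hB.inner_nonneg x)

lemma one_le_max_gThomp [Nontrivial E] {A B : E →L[ℝ] E} (hA : StrictlyPos A)
    (hB : StrictlyPos B) : 1 ≤ max (gThomp A B) (gThomp B A) := by
  by_contra hc
  push_neg at hc
  have h1 : gThomp A B < 1 := lt_of_le_of_lt (le_max_left _ _) hc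
  have h2 : gThomp B A < 1 := lt_of_le_of_lt (le_max_right _ _) hc
  obtain ⟨l, hl, hl1⟩ := exists_lt_of_csInf_lt (gSet_nonempty hA hB) h1
  obtain ⟨k, hk, hk1⟩ := exists_lt_of_csInf_lt (gSet_nonempty hB hA) h2
  have key : Loewner A ((l * k) • A) := by
    have s1 : Loewner (l • B) (l • (k • A)) := hk.2.smul (le_of_lt hl.1)
    have s2 := hl.2.trans s1
    rwa [smul_smul] at s2
  obtain ⟨x, hx⟩ := exists_ne (0 : E)
  obtain ⟨α, hα, hca⟩ := hA.coercive
  have hxn : 0 < ‖x‖ := norm_pos_iff.mpr hx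
  have hAx : 0 < ⟪A x, x⟫ := lt_of_lt_of_le (by positivity) (hca x)
  have h3 := key.inner_le x
  simp only [ContinuousLinearMap.smul_apply, real_inner_smul_left] at h3
  have hlk : l * k < 1 := by nlinarith [hl.1, hk.1]
  nlinarith

lemma subsingleton_dThomp [Subsingleton E] (A B : E →L[ℝ] E) : dThomp A B = 0 := by
  have hL : ∀ X Y : E →L[ℝ] E, Loewner X Y := by
    intro X Y
    have : Y - X = 0 := Subsingleton.elim _ _
    rw [Loewner, this]
    exact ContinuousLinearMap.isPositive_zero
  have hset : ∀ X Y : E →L[ℝ] E, {l : ℝ | 0 < l ∧ Loewner X (l • Y)} = Set.Ioi 0 := by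
    intro X Y
    ext l
    simp only [Set.mem_setOf_eq, Set.mem_Ioi, and_iff_left_iff_imp]
    exact fun _ => hL _ _
  have hg : ∀ X Y : E →L[ℝ] E, gThomp X Y = 0 := by
    intro X Y
    rw [gThomp, hset, csInf_Ioi]
  rw [dThomp, hg, hg, max_self, Real.log_zero]
theorem rcc_thompson_nonexpansive (L : H →L[ℝ] G) (hL : BoundedBelow L)
    (hL1 : ‖L‖ ≤ 1) (γ : ℝ) (hγ : 0 < γ)
    (A B : G →L[ℝ] G) (hA : StrictlyPos A) (hB : StrictlyPos B) :
    dThomp (rcc L γ A) (rcc L γ B) ≤ dThomp A B := by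
  rcases subsingleton_or_nontrivial G with hG | hG
  · haveI hH : Subsingleton H := by
      obtain ⟨β, hβ, hb⟩ := hL
      refine subsingleton_of_forall_eq 0 fun x => ?_
      have h1 := hb x
      have h2 : L x = 0 := Subsingleton.elim _ _
      rw [h2, norm_zero] at h1
      have h3 : ‖x‖ ≤ 0 := by nlinarith
      exact norm_le_zero_iff.mp h3
    rw [subsingleton_dThomp, subsingleton_dThomp]
  · set m := max (gThomp A B) (gThomp B A) with hm
    have hm1 : 1 ≤ m := one_le_max_gThomp hA hB
    have key : ∀ X Y : G →L[ℝ] G, StrictlyPos X → StrictlyPos Y → gThomp X Y ≤ m →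
        gThomp (rcc L γ X) (rcc L γ Y) ≤ m := by
      intro X Y hX hY hXY
      refine le_of_forall_pos_le_add fun ε hε => ?_
      have hlt : gThomp X Y < m + ε := lt_of_le_of_lt hXY (by linarith)
      obtain ⟨l, hl, hl1⟩ := exists_lt_of_csInf_lt (gSet_nonempty hX hY) hlt
      have hle : Loewner X ((m + ε) • Y) := loewner_smul_mono hY hl.2 (le_of_lt hl1)
      have h5 := rcc_mono_smul L hL1 hγ hX hY (ρ := m + ε) (by linarith) hle
      exact gThomp_le (by linarith) h5
    have g1 : gThomp (rcc L γ A) (rcc L γ B) ≤ m := key A B hA hB (le_max_left _ _)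
    have g2 : gThomp (rcc L γ B) (rcc L γ A) ≤ m := key B A hB hA (le_max_right _ _)
    rw [dThomp, dThomp, ← hm]
    set mx := max (gThomp (rcc L γ A) (rcc L γ B)) (gThomp (rcc L γ B) (rcc L γ A)) with hmx
    have hmx0 : 0 ≤ mx := le_trans (gThomp_nonneg _ _) (le_max_left _ _)
    have hmxm : mx ≤ m := max_le g1 g2
    rcases eq_or_lt_of_le hmx0 with h0 | h0
    · rw [← h0, Real.log_zero]
      exact Real.log_nonneg hm1
    · exact Real.log_le_log h0 hmxm

end
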